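/- arXiv:1006.0045 — 3 statements merged into one kernel-verified Lean document; each statement's English description precedes it below -/
import Mathlib

section
/- Let F be a distribution function on the reals with F(0) = 1/2, admitting a density f, and suppose ∫ |x|^δ f(x) dx < ∞ for some δ ∈ (0,1). Then for every γ ∈ (0,1) and every odd n = 2m+1 with n > 1 + 2γ/δ, the sample median Med_n of n i.i.d. observations from F satisfies E_F |Med_n|^γ < ∞. -/
open MeasureTheory ProbabilityTheory Finset
open scoped ENNReal NNReal

noncomputable def orderStat {Ω : Type*} {n : ℕ} (X : Fin n → Ω → ℝ) (k : ℕ) (ω : Ω) : ℝ :=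
  sInf {t : ℝ | k ≤ (Finset.univ.filter (fun i => X i ω ≤ t)).card}

lemma cnt_mono {Ω : Type*} {n : ℕ} (X : Fin n → Ω → ℝ) (ω : Ω) {s u : ℝ} (h : s ≤ u) :
    (Finset.univ.filter (fun i => X i ω ≤ s)).card ≤
      (Finset.univ.filter (fun i => X i ω ≤ u)).card :=
  Finset.card_le_card (Finset.monotone_filter_right _ (fun i _ hi => le_trans hi h))

lemma orderStat_le_iff {Ω : Type*} {n : ℕ} (X : Fin n → Ω → ℝ) {k : ℕ}
    (hk : 0 < k) (hkn : k ≤ n) (ω : Ω) (t : ℝ) :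
    orderStat X k ω ≤ t ↔ k ≤ (Finset.univ.filter (fun i => X i ω ≤ t)).card := by
  have hn : 0 < n := lt_of_lt_of_le hk hkn
  haveI : Nonempty (Fin n) := Fin.pos_iff_nonempty.mp hn
  set S := {s : ℝ | k ≤ (Finset.univ.filter (fun i => X i ω ≤ s)).card} with hS
  have hTne : (Finset.univ.image (fun i => X i ω)).Nonempty :=
    (Finset.univ_nonempty).image _
  set T := Finset.univ.image (fun i => X i ω) with hT
  have hmaxS : T.max' hTne ∈ S := by
    have : Finset.univ.filter (fun i => X i ω ≤ T.max' hTne) = Finset.univ := by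
      apply Finset.filter_true_of_mem
      intro i _
      exact Finset.le_max' T (X i ω) (Finset.mem_image_of_mem _ (Finset.mem_univ i))
    simp only [hS, Set.mem_setOf_eq, this, Finset.card_univ, Fintype.card_fin]
    exact hkn
  have hSne : S.Nonempty := ⟨_, hmaxS⟩
  have hbdd : BddBelow S := by
    refine ⟨T.min' hTne, fun s hs => ?_⟩
    by_contra hlt
    push_neg at hlt
    have : Finset.univ.filter (fun i => X i ω ≤ s) = ∅ := by
      apply Finset.filter_false_of_mem
      intro i _
      have := Finset.min'_le T (X i ω) (Finset.mem_image_of_mem _ (Finset.mem_univ i))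
      linarith [this]
    simp only [hS, Set.mem_setOf_eq, this, Finset.card_empty] at hs
    omega
  have hmem : sInf S ∈ S := by
    set a := sInf S with ha
    by_contra hna
    -- count at a is < k
    have hcount : (Finset.univ.filter (fun i => X i ω ≤ a)).card < k := by
      simpa [hS, Set.mem_setOf_eq, not_le] using hna
    set J := Finset.univ.filter (fun i => a < X i ω) with hJ
    rcases J.eq_empty_or_nonempty with hJe | hJne
    · -- all values ≤ a, count = n ≥ k, contradiction
      have : Finset.univ.filter (fun i => X i ω ≤ a) = Finset.univ := by
        apply Finset.filter_true_of_mem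
        intro i _
        by_contra hgt
        push_neg at hgt
        have : i ∈ J := by simp [hJ, hgt]
        simp [hJe] at this
      rw [this] at hcount
      simp only [Finset.card_univ, Fintype.card_fin] at hcount
      omega
    · have hJim : (J.image (fun i => X i ω)).Nonempty := hJne.image _
      set c := (J.image (fun i => X i ω)).min' hJim with hc
      have hac : a < c := by
        obtain ⟨i, hi, hie⟩ := Finset.mem_image.mp ((J.image (fun i => X i ω)).min'_mem hJim)
        rw [hc, ← hie]
        exact (Finset.mem_filter.mp hi).2
      have hlb : ∀ s ∈ S, c ≤ s := by
        intro s hs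
        by_contra hsc
        push_neg at hsc
        have hsub : Finset.univ.filter (fun i => X i ω ≤ s) ⊆
            Finset.univ.filter (fun i => X i ω ≤ a) := by
          intro i hi
          have hxs : X i ω ≤ s := (Finset.mem_filter.mp hi).2
          simp only [Finset.mem_filter, Finset.mem_univ, true_and]
          by_contra hgt
          push_neg at hgt
          have hiJ : i ∈ J := by simp [hJ, hgt]
          have : c ≤ X i ω :=
            Finset.min'_le _ _ (Finset.mem_image_of_mem _ hiJ)
          linarith
        have := Finset.card_le_card hsub
        have hks : k ≤ (Finset.univ.filter (fun i => X i ω ≤ s)).card := hs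
        omega
      have : c ≤ a := le_csInf hSne hlb
      linarith
  constructor
  · intro h
    exact le_trans hmem (cnt_mono X ω h)
  · intro h
    exact csInf_le hbdd h

lemma lt_orderStat_iff {Ω : Type*} {m : ℕ} (X : Fin (2 * m + 1) → Ω → ℝ) (ω : Ω) (t : ℝ) :
    t < orderStat X (m + 1) ω ↔
      m + 1 ≤ (Finset.univ.filter (fun i => t < X i ω)).card := by
  rw [← not_le, orderStat_le_iff X (Nat.succ_pos m) (by omega) ω t, not_le]
  have hsum := Finset.card_filter_add_card_filter_not
    (s := (Finset.univ : Finset (Fin (2 * m + 1)))) (p := fun i => X i ω ≤ t)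
  have hcongr : Finset.univ.filter (fun i => ¬ X i ω ≤ t) =
      Finset.univ.filter (fun i => t < X i ω) := by
    apply Finset.filter_congr
    intro i _
    simp [not_le]
  rw [hcongr] at hsum
  simp only [Finset.card_univ, Fintype.card_fin] at hsum
  omega

lemma measurableSet_cnt_event {Ω : Type*} [MeasurableSpace Ω] {n : ℕ}
    (X : Fin n → Ω → ℝ) (hmeas : ∀ i, Measurable (X i)) (p : ℝ → Prop) [DecidablePred p]
    (hp : MeasurableSet {x | p x}) (k : ℕ) :
    MeasurableSet {ω | k ≤ (Finset.univ.filter (fun i => p (X i ω))).card} := by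
  classical
  have hg : Measurable (fun ω => (Finset.univ.filter (fun i => p (X i ω))).card) := by
    have : (fun ω => (Finset.univ.filter (fun i => p (X i ω))).card) =
        fun ω => ∑ i : Fin n, if p (X i ω) then 1 else 0 := by
      funext ω
      rw [Finset.card_filter]
    rw [this]
    apply Finset.measurable_sum
    intro i _
    exact Measurable.ite ((hmeas i) hp) measurable_const measurable_const
  exact hg (measurableSet_Ici (a := k))

lemma measurable_orderStat {Ω : Type*} [MeasurableSpace Ω] {m : ℕ}
    (X : Fin (2 * m + 1) → Ω → ℝ) (hmeas : ∀ i, Measurable (X i)) :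
    Measurable (orderStat X (m + 1)) := by
  apply measurable_of_Iic
  intro t
  have : orderStat X (m + 1) ⁻¹' (Set.Iic t) =
      {ω | m + 1 ≤ (Finset.univ.filter (fun i => X i ω ≤ t)).card} := by
    ext ω
    simp only [Set.mem_preimage, Set.mem_Iic, Set.mem_setOf_eq]
    exact orderStat_le_iff X (Nat.succ_pos m) (by omega) ω t
  rw [this]
  exact measurableSet_cnt_event X hmeas (fun x => x ≤ t) measurableSet_Iic _

lemma count_event_measure_le {Ω : Type*} [MeasurableSpace Ω] (μ : Measure Ω) {n : ℕ}
    (X : Fin n → Ω → ℝ)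
    (hindep : iIndepFun X μ)
    (p : ℝ → Prop) [DecidablePred p] (hp : MeasurableSet {x | p x}) (k : ℕ) (q : ℝ≥0∞)
    (hq : ∀ i, μ {ω | p (X i ω)} ≤ q) :
    μ {ω | k ≤ (Finset.univ.filter (fun i => p (X i ω))).card} ≤ (n.choose k) * q ^ k := by
  have hpre : ∀ i : Fin n, X i ⁻¹' {x | p x} = {ω | p (X i ω)} := fun i => rfl
  have hsub : {ω | k ≤ (Finset.univ.filter (fun i => p (X i ω))).card} ⊆
      ⋃ s ∈ Finset.powersetCard k (Finset.univ : Finset (Fin n)),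
        ⋂ i ∈ s, {ω | p (X i ω)} := by
    intro ω hω
    obtain ⟨s, hssub, hscard⟩ :=
      Finset.exists_subset_card_eq (s := Finset.univ.filter (fun i => p (X i ω))) (n := k) hω
    refine Set.mem_biUnion (Finset.mem_powersetCard.mpr ⟨Finset.subset_univ s, hscard⟩) ?_
    refine Set.mem_iInter₂.mpr (fun i hi => ?_)
    exact (Finset.mem_filter.mp (hssub hi)).2
  refine le_trans (measure_mono hsub) ?_
  refine le_trans (measure_biUnion_finset_le _ _) ?_
  have hterm : ∀ s ∈ Finset.powersetCard k (Finset.univ : Finset (Fin n)),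
      μ (⋂ i ∈ s, {ω | p (X i ω)}) ≤ q ^ k := by
    intro s hs
    obtain ⟨-, hscard⟩ := Finset.mem_powersetCard.mp hs
    have heq := hindep.measure_inter_preimage_eq_mul s (sets := fun _ => {x | p x})
      (fun i _ => hp)
    simp only [hpre] at heq
    rw [heq]
    calc ∏ i ∈ s, μ {ω | p (X i ω)} ≤ ∏ _i ∈ s, q := Finset.prod_le_prod' (fun i _ => hq i)
      _ = q ^ k := by rw [Finset.prod_const, hscard]
  refine le_trans (Finset.sum_le_sum hterm) ?_
  rw [Finset.sum_const, Finset.card_powersetCard, Finset.card_univ, Fintype.card_fin,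
    nsmul_eq_mul]

lemma tail_bound {Ω : Type*} [MeasurableSpace Ω] (μ : Measure Ω)
    (Y : Ω → ℝ) (hY : Measurable Y) (f : ℝ → ℝ) (hf : ∀ x, 0 ≤ f x)
    (hfmeas : Measurable f)
    (hdens : Measure.map Y μ = volume.withDensity (fun x => ENNReal.ofReal (f x)))
    (δ : ℝ) (hδ : 0 < δ) (t : ℝ) (ht : 0 < t)
    (A : Set ℝ) (hA : MeasurableSet A) (hAsub : ∀ x ∈ A, t ≤ |x|) :
    μ (Y ⁻¹' A) ≤ ENNReal.ofReal (t ^ (-δ)) * ∫⁻ x, ENNReal.ofReal (|x| ^ δ * f x) := by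
  have h1 : μ (Y ⁻¹' A) = ∫⁻ x in A, ENNReal.ofReal (f x) := by
    rw [← Measure.map_apply hY hA, hdens, withDensity_apply _ hA]
  rw [h1]
  have h2 : ∀ x ∈ A, ENNReal.ofReal (f x) ≤
      ENNReal.ofReal (t ^ (-δ)) * ENNReal.ofReal (|x| ^ δ * f x) := by
    intro x hx
    rw [← ENNReal.ofReal_mul (Real.rpow_nonneg ht.le _)]
    apply ENNReal.ofReal_le_ofReal
    have htx : t ^ δ ≤ |x| ^ δ := Real.rpow_le_rpow ht.le (hAsub x hx) hδ.le
    have htp : (0:ℝ) < t ^ δ := Real.rpow_pos_of_pos ht δ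
    have hone : (1:ℝ) ≤ t ^ (-δ) * |x| ^ δ := by
      rw [Real.rpow_neg ht.le]
      rw [inv_mul_eq_div]
      exact (one_le_div htp).mpr htx
    calc f x = 1 * f x := (one_mul _).symm
      _ ≤ (t ^ (-δ) * |x| ^ δ) * f x := mul_le_mul_of_nonneg_right hone (hf x)
      _ = t ^ (-δ) * (|x| ^ δ * f x) := by ring
  calc ∫⁻ x in A, ENNReal.ofReal (f x)
      ≤ ∫⁻ x in A, ENNReal.ofReal (t ^ (-δ)) * ENNReal.ofReal (|x| ^ δ * f x) := by
        apply setLIntegral_mono (by fun_prop) h2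
    _ = ENNReal.ofReal (t ^ (-δ)) * ∫⁻ x in A, ENNReal.ofReal (|x| ^ δ * f x) :=
        lintegral_const_mul' _ _ ENNReal.ofReal_ne_top
    _ ≤ ENNReal.ofReal (t ^ (-δ)) * ∫⁻ x, ENNReal.ofReal (|x| ^ δ * f x) := by
        gcongr
        exact Measure.restrict_le_self

/-- Finiteness of `E_F |Med_n|^γ` for odd `n = 2m+1 > 1 + 2γ/δ`, under the moment
condition `∫ |x|^δ f(x) dx < ∞` and `F(0) = 1/2`. -/
theorem stmt2 {Ω : Type*} [MeasurableSpace Ω] (μ : Measure Ω) [IsProbabilityMeasure μ]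
    (m : ℕ) (X : Fin (2 * m + 1) → Ω → ℝ) (hmeas : ∀ i, Measurable (X i))
    (hindep : iIndepFun X μ)
    (f : ℝ → ℝ) (hf : ∀ x, 0 ≤ f x) (hfmeas : Measurable f)
    (hdens : ∀ i, Measure.map (X i) μ = volume.withDensity (fun x => ENNReal.ofReal (f x)))
    (F : ℝ → ℝ) (hF : ∀ t, F t = (μ {ω | X 0 ω ≤ t}).toReal) (hF0 : F 0 = 1 / 2)
    (δ : ℝ) (hδ : δ ∈ Set.Ioo (0 : ℝ) 1)
    (hmom : ∫⁻ x, ENNReal.ofReal (|x| ^ δ * f x) < ⊤)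
    (γ : ℝ) (hγ : γ ∈ Set.Ioo (0 : ℝ) 1)
    (hn : (1 : ℝ) + 2 * γ / δ < (2 * m + 1 : ℕ)) :
    ∫⁻ ω, ENNReal.ofReal (|orderStat X (m + 1) ω| ^ γ) ∂μ < ⊤ := by
  obtain ⟨hδ0, hδ1⟩ := hδ
  obtain ⟨hγ0, hγ1⟩ := hγ
  set M := orderStat X (m + 1) with hM
  set C := ∫⁻ x, ENNReal.ofReal (|x| ^ δ * f x) with hCdef
  set k := m + 1 with hk
  -- layer cake
  have hMmeas : Measurable M := measurable_orderStat X hmeas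
  have habs : AEMeasurable (fun ω => |M ω|) μ := hMmeas.abs.aemeasurable
  have g_intble : ∀ t > (0:ℝ), IntervalIntegrable (fun s => γ * s ^ (γ - 1)) volume 0 t :=
    fun t _ => (intervalIntegral.intervalIntegrable_rpow' (by linarith)).const_mul γ
  have g_nn : ∀ᵐ t ∂(volume.restrict (Set.Ioi (0:ℝ))), 0 ≤ γ * t ^ (γ - 1) := by
    filter_upwards [ae_restrict_mem measurableSet_Ioi] with t ht
    have : (0:ℝ) < t := ht
    positivity
  have hlayer := lintegral_comp_eq_lintegral_meas_lt_mul μ (f := fun ω => |M ω|)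
    (g := fun s => γ * s ^ (γ - 1))
    (Filter.Eventually.of_forall fun ω => abs_nonneg _) habs g_intble g_nn
  have hG : ∀ ω, ∫ s in (0:ℝ)..|M ω|, γ * s ^ (γ - 1) = |M ω| ^ γ := by
    intro ω
    have hir := integral_rpow (a := 0) (b := |M ω|) (Or.inl (by linarith : (-1:ℝ) < γ - 1))
    rw [intervalIntegral.integral_const_mul, hir]
    rw [Real.zero_rpow (by linarith : γ - 1 + 1 ≠ 0)]
    have hγne : γ ≠ 0 := ne_of_gt hγ0
    rw [sub_add_cancel, sub_zero, mul_div_cancel₀ _ hγne]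
  have key : ∫⁻ ω, ENNReal.ofReal (|M ω| ^ γ) ∂μ =
      ∫⁻ t in Set.Ioi (0:ℝ), μ {a | t < |M a|} * ENNReal.ofReal (γ * t ^ (γ - 1)) := by
    rw [← hlayer]
    apply lintegral_congr
    intro ω
    rw [hG]
  rw [key]
  -- split the integral
  rw [← Set.Ioc_union_Ioi_eq_Ioi (zero_le_one (α := ℝ)),
    lintegral_union measurableSet_Ioi (Set.Ioc_disjoint_Ioi le_rfl)]
  apply ENNReal.add_lt_top.mpr
  constructor
  · -- integral over (0, 1]
    have hb : ∫⁻ t in Set.Ioc (0:ℝ) 1, μ {a | t < |M a|} * ENNReal.ofReal (γ * t ^ (γ - 1)) ≤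
        ∫⁻ t in Set.Ioc (0:ℝ) 1, ENNReal.ofReal (γ * t ^ (γ - 1)) := by
      apply lintegral_mono
      intro t
      exact mul_le_of_le_one_left zero_le prob_le_one
    refine lt_of_le_of_lt hb ?_
    have hint : IntegrableOn (fun s => γ * s ^ (γ - 1)) (Set.Ioc (0:ℝ) 1) volume :=
      (g_intble 1 one_pos).1
    exact hint.lintegral_lt_top
  · -- integral over (1, ∞)
    have hCne : C ≠ ⊤ := ne_of_lt hmom
    set D : ℝ≥0∞ := 2 * ((2 * m + 1).choose k) * C ^ k with hD
    have hDne : D ≠ ⊤ := by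
      apply ENNReal.mul_ne_top
      · exact ENNReal.mul_ne_top (by simp) (by simp)
      · exact ENNReal.pow_ne_top hCne
    -- tail bound for t > 1
    have htail : ∀ t ∈ Set.Ioi (1:ℝ), μ {a | t < |M a|} ≤
        D * ENNReal.ofReal (t ^ (-(δ * k))) := by
      intro t ht
      have ht0 : (0:ℝ) < t := lt_trans one_pos ht
      have hq1 : ∀ i, μ {ω | t < X i ω} ≤ ENNReal.ofReal (t ^ (-δ)) * C := by
        intro i
        have : {ω | t < X i ω} = X i ⁻¹' (Set.Ioi t) := rfl
        rw [this]
        exact tail_bound μ (X i) (hmeas i) f hf hfmeas (hdens i) δ hδ0 t ht0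
          (Set.Ioi t) measurableSet_Ioi
          (fun x hx => le_trans (le_of_lt hx) (le_abs_self x))
      have hq2 : ∀ i, μ {ω | X i ω ≤ -t} ≤ ENNReal.ofReal (t ^ (-δ)) * C := by
        intro i
        have : {ω | X i ω ≤ -t} = X i ⁻¹' (Set.Iic (-t)) := rfl
        rw [this]
        exact tail_bound μ (X i) (hmeas i) f hf hfmeas (hdens i) δ hδ0 t ht0
          (Set.Iic (-t)) measurableSet_Iic
          (fun x hx => le_trans (le_neg_of_le_neg hx) (neg_le_abs x))
      have hsub : {a | t < |M a|} ⊆ {a | t < M a} ∪ {a | M a ≤ -t} := by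
        intro a ha
        rcases lt_abs.mp (Set.mem_setOf_eq ▸ ha) with h | h
        · exact Or.inl h
        · right
          simpa using le_neg_of_le_neg (le_of_lt h)
      have h1 : μ {a | t < M a} ≤
          ((2 * m + 1).choose k : ℝ≥0∞) * (ENNReal.ofReal (t ^ (-δ)) * C) ^ k := by
        have hset : {a | t < M a} =
            {ω | k ≤ (Finset.univ.filter (fun i => t < X i ω)).card} := by
          ext ω
          exact lt_orderStat_iff X ω t
        rw [hset]
        exact count_event_measure_le μ X hindep (fun x => t < x) measurableSet_Ioi k _ hq1
      have h2 : μ {a | M a ≤ -t} ≤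
          ((2 * m + 1).choose k : ℝ≥0∞) * (ENNReal.ofReal (t ^ (-δ)) * C) ^ k := by
        have hset : {a | M a ≤ -t} =
            {ω | k ≤ (Finset.univ.filter (fun i => X i ω ≤ -t)).card} := by
          ext ω
          exact orderStat_le_iff X (Nat.succ_pos m) (by omega) ω (-t)
        rw [hset]
        exact count_event_measure_le μ X hindep (fun x => x ≤ -t) measurableSet_Iic k _ hq2
      have hofk : (ENNReal.ofReal (t ^ (-δ))) ^ k = ENNReal.ofReal (t ^ (-(δ * k))) := by
        rw [← ENNReal.ofReal_pow (Real.rpow_nonneg ht0.le _)]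
        congr 1
        rw [← Real.rpow_natCast (t ^ (-δ)) k, ← Real.rpow_mul ht0.le]
        ring_nf
      calc μ {a | t < |M a|} ≤ μ ({a | t < M a} ∪ {a | M a ≤ -t}) := measure_mono hsub
        _ ≤ μ {a | t < M a} + μ {a | M a ≤ -t} := measure_union_le _ _
        _ ≤ ((2 * m + 1).choose k : ℝ≥0∞) * (ENNReal.ofReal (t ^ (-δ)) * C) ^ k +
            ((2 * m + 1).choose k : ℝ≥0∞) * (ENNReal.ofReal (t ^ (-δ)) * C) ^ k :=
              add_le_add h1 h2
        _ = D * ENNReal.ofReal (t ^ (-(δ * k))) := by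
            rw [hD, mul_pow, hofk]; ring
    -- now bound the integral over (1, ∞)
    have hmono : ∫⁻ t in Set.Ioi (1:ℝ), μ {a | t < |M a|} * ENNReal.ofReal (γ * t ^ (γ - 1)) ≤
        ∫⁻ t in Set.Ioi (1:ℝ),
          (D * ENNReal.ofReal γ) * ENNReal.ofReal (t ^ (γ - 1 - δ * k)) := by
      apply setLIntegral_mono' measurableSet_Ioi
      intro t ht
      have ht0 : (0:ℝ) < t := lt_trans one_pos ht
      calc μ {a | t < |M a|} * ENNReal.ofReal (γ * t ^ (γ - 1))
          ≤ (D * ENNReal.ofReal (t ^ (-(δ * k)))) * ENNReal.ofReal (γ * t ^ (γ - 1)) := by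
            gcongr
            exact htail t ht
        _ = (D * ENNReal.ofReal γ) * ENNReal.ofReal (t ^ (γ - 1 - δ * k)) := by
            rw [ENNReal.ofReal_mul hγ0.le]
            have : ENNReal.ofReal (t ^ (-(δ * (k:ℝ)))) * ENNReal.ofReal (t ^ (γ - 1)) =
                ENNReal.ofReal (t ^ (γ - 1 - δ * k)) := by
              rw [← ENNReal.ofReal_mul (Real.rpow_nonneg ht0.le _), ← Real.rpow_add ht0]
              congr 1
              ring
            calc D * ENNReal.ofReal (t ^ (-(δ * (k:ℝ)))) *
                  (ENNReal.ofReal γ * ENNReal.ofReal (t ^ (γ - 1)))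
                = (D * ENNReal.ofReal γ) *
                  (ENNReal.ofReal (t ^ (-(δ * (k:ℝ)))) * ENNReal.ofReal (t ^ (γ - 1))) := by
                  ring
              _ = (D * ENNReal.ofReal γ) * ENNReal.ofReal (t ^ (γ - 1 - δ * k)) := by rw [this]
    refine lt_of_le_of_lt hmono ?_
    rw [lintegral_const_mul' _ _ (ENNReal.mul_ne_top hDne ENNReal.ofReal_ne_top)]
    have hr : γ - 1 - δ * k < -1 := by
      have hcast : ((2 * m + 1 : ℕ) : ℝ) = 2 * (m:ℝ) + 1 := by push_cast; ring
      rw [hcast] at hn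
      have h2 : 2 * γ / δ < 2 * m := by linarith
      rw [div_lt_iff₀ hδ0] at h2
      have hkr : (k:ℝ) = (m:ℝ) + 1 := by rw [hk]; push_cast; ring
      nlinarith [hkr]
    have hint : IntegrableOn (fun t : ℝ => t ^ (γ - 1 - δ * k)) (Set.Ioi 1) volume :=
      integrableOn_Ioi_rpow_of_lt hr one_pos
    exact ENNReal.mul_lt_top
      (ENNReal.mul_ne_top hDne ENNReal.ofReal_ne_top).lt_top hint.lintegral_lt_top
end

section
/- Let F be a distribution function on the reals with ∫ |x|^δ dF(x) < ∞ for some δ ∈ (0,1). Then g_δ(t) := |t|^δ F(t)(1-F(t)) is bounded, g_δ(t) → 0 as |t| → ∞, and ∫ [F(t)(1-F(t))]^b dt < ∞ for every b ≥ 1/δ. -/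
open MeasureTheory Filter Set

/-- For a distribution function `F` with `∫ |x|^δ dF(x) < ∞` (δ ∈ (0,1)):
`g_δ(t) = |t|^δ F(t)(1-F(t))` is bounded and tends to `0` as `|t| → ∞`,
and `∫ [F(t)(1-F(t))]^b dt < ∞` for every `b ≥ 1/δ`. -/
theorem stmt3 (F : StieltjesFunction ℝ)
    (hbot : Tendsto F atBot (nhds (0 : ℝ))) (htop : Tendsto F atTop (nhds (1 : ℝ)))
    (δ : ℝ) (hδ : δ ∈ Set.Ioo (0 : ℝ) 1)
    (hmom : ∫⁻ x, ENNReal.ofReal (|x| ^ δ) ∂F.measure < ⊤) :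
    (∃ C : ℝ, ∀ t : ℝ, |t| ^ δ * F t * (1 - F t) ≤ C) ∧
    Tendsto (fun t : ℝ => |t| ^ δ * F t * (1 - F t)) atTop (nhds 0) ∧
    Tendsto (fun t : ℝ => |t| ^ δ * F t * (1 - F t)) atBot (nhds 0) ∧
    ∀ b : ℝ, 1 / δ ≤ b → ∫⁻ t, ENNReal.ofReal ((F t * (1 - F t)) ^ b) < ⊤ := by
  obtain ⟨hδ0, hδ1⟩ := hδ
  set μ := F.measure with hμ
  have hF0 : ∀ t, 0 ≤ F t := fun t => F.mono.le_of_tendsto hbot t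
  have hF1 : ∀ t, F t ≤ 1 := fun t => F.mono.ge_of_tendsto htop t
  have hmeas : Measurable fun x : ℝ => ENNReal.ofReal (|x| ^ δ) := by fun_prop
  set ν := μ.withDensity (fun x => ENNReal.ofReal (|x| ^ δ)) with hν
  have hν_apply : ∀ s : Set ℝ, MeasurableSet s → ν s = ∫⁻ x in s, ENNReal.ofReal (|x| ^ δ) ∂μ :=
    fun s hs => withDensity_apply _ hs
  have hν_univ : ν univ = ∫⁻ x, ENNReal.ofReal (|x| ^ δ) ∂μ := by
    rw [hν_apply univ MeasurableSet.univ, Measure.restrict_univ]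
  have hνfin : IsFiniteMeasure ν := ⟨by rw [hν_univ]; exact hmom⟩
  have hIic : ∀ t : ℝ, μ (Iic t) = ENNReal.ofReal (F t) := fun t => by
    rw [F.measure_Iic hbot t, sub_zero]
  have hμuniv : μ univ = 1 := by
    rw [F.measure_univ hbot htop]; norm_num
  have hIoi : ∀ t : ℝ, μ (Ioi t) = ENNReal.ofReal (1 - F t) := by
    intro t
    rw [← compl_Iic, measure_compl measurableSet_Iic (by rw [hIic]; exact ENNReal.ofReal_ne_top),
      hμuniv, hIic, ENNReal.ofReal_sub 1 (hF0 t), ENNReal.ofReal_one]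
  -- Markov inequalities
  have hmarkR : ∀ t : ℝ, 0 < t → ENNReal.ofReal (t ^ δ * (1 - F t)) ≤ ν (Ioi t) := by
    intro t ht
    rw [hν_apply _ measurableSet_Ioi,
      ENNReal.ofReal_mul (Real.rpow_nonneg ht.le δ)]
    calc ENNReal.ofReal (t ^ δ) * ENNReal.ofReal (1 - F t)
        = ENNReal.ofReal (t ^ δ) * μ (Ioi t) := by rw [hIoi]
      _ = ∫⁻ _ in Ioi t, ENNReal.ofReal (t ^ δ) ∂μ := by rw [setLIntegral_const]
      _ ≤ ∫⁻ x in Ioi t, ENNReal.ofReal (|x| ^ δ) ∂μ := by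
          refine setLIntegral_mono hmeas fun x hx => ?_
          exact ENNReal.ofReal_le_ofReal
            (Real.rpow_le_rpow ht.le ((le_of_lt hx).trans (le_abs_self x)) hδ0.le)
  have hmarkL : ∀ t : ℝ, t < 0 → ENNReal.ofReal (|t| ^ δ * F t) ≤ ν (Iic t) := by
    intro t ht
    rw [hν_apply _ measurableSet_Iic,
      ENNReal.ofReal_mul (Real.rpow_nonneg (abs_nonneg t) δ)]
    calc ENNReal.ofReal (|t| ^ δ) * ENNReal.ofReal (F t)
        = ENNReal.ofReal (|t| ^ δ) * μ (Iic t) := by rw [hIic]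
      _ = ∫⁻ _ in Iic t, ENNReal.ofReal (|t| ^ δ) ∂μ := by rw [setLIntegral_const]
      _ ≤ ∫⁻ x in Iic t, ENNReal.ofReal (|x| ^ δ) ∂μ := by
          refine setLIntegral_mono hmeas fun x hx => ?_
          refine ENNReal.ofReal_le_ofReal (Real.rpow_le_rpow (abs_nonneg t) ?_ hδ0.le)
          rw [abs_of_neg ht, abs_of_neg (lt_of_le_of_lt hx ht)]
          exact neg_le_neg hx
  set Mr : ℝ := (ν univ).toReal with hMr
  have hMr0 : 0 ≤ Mr := ENNReal.toReal_nonneg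
  -- real-valued Markov bounds
  have hR : ∀ t : ℝ, 0 < t → t ^ δ * (1 - F t) ≤ (ν (Ioi t)).toReal := by
    intro t ht
    have h1 : 0 ≤ t ^ δ * (1 - F t) :=
      mul_nonneg (Real.rpow_nonneg ht.le δ) (sub_nonneg.2 (hF1 t))
    have := ENNReal.toReal_mono (measure_ne_top ν _) (hmarkR t ht)
    rwa [ENNReal.toReal_ofReal h1] at this
  have hL : ∀ t : ℝ, t < 0 → |t| ^ δ * F t ≤ (ν (Iic t)).toReal := by
    intro t ht
    have h1 : 0 ≤ |t| ^ δ * F t :=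
      mul_nonneg (Real.rpow_nonneg (abs_nonneg t) δ) (hF0 t)
    have := ENNReal.toReal_mono (measure_ne_top ν _) (hmarkL t ht)
    rwa [ENNReal.toReal_ofReal h1] at this
  have hg0 : ∀ t : ℝ, 0 ≤ |t| ^ δ * F t * (1 - F t) := fun t =>
    mul_nonneg (mul_nonneg (Real.rpow_nonneg (abs_nonneg t) δ) (hF0 t)) (sub_nonneg.2 (hF1 t))
  have hνmono : ∀ s : Set ℝ, (ν s).toReal ≤ Mr := fun s =>
    ENNReal.toReal_mono (measure_ne_top ν _) (measure_mono (subset_univ s))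
  -- bound on g for positive t
  have hgR : ∀ t : ℝ, 0 < t → |t| ^ δ * F t * (1 - F t) ≤ (ν (Ioi t)).toReal := by
    intro t ht
    rw [abs_of_pos ht]
    calc t ^ δ * F t * (1 - F t) ≤ t ^ δ * 1 * (1 - F t) := by
          refine mul_le_mul_of_nonneg_right (mul_le_mul_of_nonneg_left (hF1 t) ?_) ?_
          · exact Real.rpow_nonneg ht.le δ
          · exact sub_nonneg.2 (hF1 t)
      _ = t ^ δ * (1 - F t) := by ring
      _ ≤ (ν (Ioi t)).toReal := hR t ht
  have hgL : ∀ t : ℝ, t < 0 → |t| ^ δ * F t * (1 - F t) ≤ (ν (Iic t)).toReal := by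
    intro t ht
    calc |t| ^ δ * F t * (1 - F t) ≤ |t| ^ δ * F t * 1 := by
          refine mul_le_mul_of_nonneg_left (by linarith [hF0 t]) ?_
          exact mul_nonneg (Real.rpow_nonneg (abs_nonneg t) δ) (hF0 t)
      _ = |t| ^ δ * F t := by ring
      _ ≤ (ν (Iic t)).toReal := hL t ht
  refine ⟨⟨Mr, fun t => ?_⟩, ?_, ?_, ?_⟩
  · -- boundedness
    rcases lt_trichotomy t 0 with ht | ht | ht
    · exact (hgL t ht).trans (hνmono _)
    · simp [ht, Real.zero_rpow hδ0.ne', hMr0]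
    · exact (hgR t ht).trans (hνmono _)
  · -- tendsto atTop
    have h1 : Tendsto (fun t : ℝ => ν (Ioi t)) atTop (nhds 0) := by
      have he : ∀ t : ℝ, ν (Ioi t) = ν univ - ν (Iic t) := by
        intro t
        rw [← compl_Iic, measure_compl measurableSet_Iic (measure_ne_top ν _)]
      simp_rw [he]
      have := ENNReal.Tendsto.sub (tendsto_const_nhds (x := ν univ))
        (tendsto_measure_Iic_atTop ν) (Or.inl (measure_ne_top ν univ))
      simpa using this
    have h2 : Tendsto (fun t : ℝ => (ν (Ioi t)).toReal) atTop (nhds 0) := by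
      have := (ENNReal.tendsto_toReal (a := 0) (by simp)).comp h1
      simpa [Function.comp_def] using this
    refine tendsto_of_tendsto_of_tendsto_of_le_of_le' tendsto_const_nhds h2
      (Eventually.of_forall hg0) ?_
    filter_upwards [eventually_gt_atTop (0 : ℝ)] with t ht using hgR t ht
  · -- tendsto atBot
    have h1 : Tendsto (fun t : ℝ => ν (Iic t)) atBot (nhds 0) := by
      have he : ∀ t : ℝ, ν (Iic t) = ν univ - ν (Ioi t) := by
        intro t
        rw [← compl_Ioi, measure_compl measurableSet_Ioi (measure_ne_top ν _)]
      simp_rw [he]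
      have hmono : Antitone fun t : ℝ => Ioi t := fun a b hab => Ioi_subset_Ioi hab
      have hU : Tendsto (fun t : ℝ => ν (Ioi t)) atBot (nhds (ν univ)) := by
        have := tendsto_measure_iUnion_atBot (μ := ν) hmono
        simpa [Set.iUnion_Ioi, Function.comp_def] using this
      have := ENNReal.Tendsto.sub (tendsto_const_nhds (x := ν univ))
        hU (Or.inl (measure_ne_top ν univ))
      simpa using this
    have h2 : Tendsto (fun t : ℝ => (ν (Iic t)).toReal) atBot (nhds 0) := by
      have := (ENNReal.tendsto_toReal (a := 0) (by simp)).comp h1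
      simpa [Function.comp_def] using this
    refine tendsto_of_tendsto_of_tendsto_of_le_of_le' tendsto_const_nhds h2
      (Eventually.of_forall hg0) ?_
    filter_upwards [eventually_lt_atBot (0 : ℝ)] with t ht using hgL t ht
  · -- integrability
    intro b hb
    have hb1 : (1:ℝ) ≤ b := le_trans (one_le_one_div hδ0 hδ1.le) hb
    have hb0 : (0:ℝ) < b := lt_of_lt_of_le one_pos hb1
    have hδb : 1 ≤ δ * b := by
      have := (div_le_iff₀ hδ0).mp hb
      nlinarith
    -- pointwise bound on the middle
    have hfle1 : ∀ t : ℝ, ENNReal.ofReal ((F t * (1 - F t)) ^ b) ≤ 1 := by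
      intro t
      rw [← ENNReal.ofReal_one]
      refine ENNReal.ofReal_le_ofReal (Real.rpow_le_one
        (mul_nonneg (hF0 t) (sub_nonneg.2 (hF1 t))) ?_ hb0.le)
      nlinarith [hF0 t, hF1 t]
    -- pointwise bound on the right tail
    have hkeyR : ∀ t : ℝ, 1 < t →
        (F t * (1 - F t)) ^ b ≤ Mr ^ (b - 1) * ((1 - F t) * t ^ (δ - 1)) := by
      intro t ht
      have ht0 : (0:ℝ) < t := lt_trans one_pos ht
      have hG0 : (0:ℝ) ≤ 1 - F t := sub_nonneg.2 (hF1 t)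
      rcases hG0.eq_or_lt with hG | hG
      · rw [← hG]
        simp [Real.zero_rpow hb0.ne']
      · have hbd : (1 - F t) ≤ Mr * t ^ (-δ) := by
          have h3 : t ^ δ * (1 - F t) ≤ Mr := (hR t ht0).trans (hνmono _)
          have h4 : (0:ℝ) < t ^ δ := Real.rpow_pos_of_pos ht0 δ
          rw [Real.rpow_neg ht0.le, ← div_eq_mul_inv, le_div_iff₀ h4]
          nlinarith
        calc (F t * (1 - F t)) ^ b ≤ (1 - F t) ^ b := by
              refine Real.rpow_le_rpow (mul_nonneg (hF0 t) hG0)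
                (mul_le_of_le_one_left hG0 (hF1 t)) hb0.le
          _ = (1 - F t) ^ (b - 1) * (1 - F t) := by
              have h := Real.rpow_add hG (b - 1) 1
              rw [Real.rpow_one] at h
              rw [← h]; norm_num
          _ ≤ (Mr * t ^ (-δ)) ^ (b - 1) * (1 - F t) := by
              exact mul_le_mul_of_nonneg_right
                (Real.rpow_le_rpow hG0 hbd (by linarith)) hG0
          _ = Mr ^ (b - 1) * t ^ (-δ * (b - 1)) * (1 - F t) := by
              rw [Real.mul_rpow hMr0 (Real.rpow_nonneg ht0.le _),
                ← Real.rpow_mul ht0.le]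
          _ ≤ Mr ^ (b - 1) * t ^ (δ - 1) * (1 - F t) := by
              refine mul_le_mul_of_nonneg_right
                (mul_le_mul_of_nonneg_left ?_ (Real.rpow_nonneg hMr0 _)) hG0
              exact Real.rpow_le_rpow_of_exponent_le ht.le (by nlinarith)
          _ = Mr ^ (b - 1) * ((1 - F t) * t ^ (δ - 1)) := by ring
    -- pointwise bound on the left tail
    have hkeyL : ∀ t : ℝ, t < -1 →
        (F t * (1 - F t)) ^ b ≤ Mr ^ (b - 1) * (F t * |t| ^ (δ - 1)) := by
      intro t ht
      have ht0 : t < 0 := lt_trans ht (by norm_num)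
      have ht1 : (1:ℝ) < |t| := by rw [abs_of_neg ht0]; linarith
      have hta : (0:ℝ) < |t| := lt_trans one_pos ht1
      have hG0 : (0:ℝ) ≤ 1 - F t := sub_nonneg.2 (hF1 t)
      rcases (hF0 t).eq_or_lt with hG | hG
      · rw [← hG]
        simp [Real.zero_rpow hb0.ne']
      · have hbd : F t ≤ Mr * |t| ^ (-δ) := by
          have h3 : |t| ^ δ * F t ≤ Mr := (hL t ht0).trans (hνmono _)
          have h4 : (0:ℝ) < |t| ^ δ := Real.rpow_pos_of_pos hta δ
          rw [Real.rpow_neg hta.le, ← div_eq_mul_inv, le_div_iff₀ h4]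
          nlinarith
        calc (F t * (1 - F t)) ^ b ≤ (F t) ^ b := by
              refine Real.rpow_le_rpow (mul_nonneg (hF0 t) hG0) ?_ hb0.le
              nlinarith [hF0 t]
          _ = (F t) ^ (b - 1) * F t := by
              have h := Real.rpow_add hG (b - 1) 1
              rw [Real.rpow_one] at h
              rw [← h]; norm_num
          _ ≤ (Mr * |t| ^ (-δ)) ^ (b - 1) * F t := by
              exact mul_le_mul_of_nonneg_right
                (Real.rpow_le_rpow (hF0 t) hbd (by linarith)) (hF0 t)
          _ = Mr ^ (b - 1) * |t| ^ (-δ * (b - 1)) * F t := by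
              rw [Real.mul_rpow hMr0 (Real.rpow_nonneg hta.le _),
                ← Real.rpow_mul hta.le]
          _ ≤ Mr ^ (b - 1) * |t| ^ (δ - 1) * F t := by
              refine mul_le_mul_of_nonneg_right
                (mul_le_mul_of_nonneg_left ?_ (Real.rpow_nonneg hMr0 _)) (hF0 t)
              exact Real.rpow_le_rpow_of_exponent_le ht1.le (by nlinarith)
          _ = Mr ^ (b - 1) * (F t * |t| ^ (δ - 1)) := by ring
    -- finiteness of the right tail integral via the layer cake formula
    have hmaxR_le : ∀ a : ℝ, max a 0 ≤ |a| := fun a => max_le (le_abs_self a) (abs_nonneg a)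
    have hmaxL_le : ∀ a : ℝ, max (-a) 0 ≤ |a| := fun a => max_le (neg_le_abs a) (abs_nonneg a)
    have hTR : ∫⁻ t in Ioi (1:ℝ), μ (Ioi t) * ENNReal.ofReal (t ^ (δ - 1)) < ⊤ := by
      have hlc := lintegral_rpow_eq_lintegral_meas_lt_mul μ (f := fun a => max a 0)
        (Eventually.of_forall fun a => le_max_right a 0)
        ((measurable_id.max measurable_const).aemeasurable) hδ0
      have hle : ∫⁻ a, ENNReal.ofReal ((max a 0) ^ δ) ∂μ ≤ ∫⁻ a, ENNReal.ofReal (|a| ^ δ) ∂μ :=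
        lintegral_mono fun a => ENNReal.ofReal_le_ofReal
          (Real.rpow_le_rpow (le_max_right a 0) (hmaxR_le a) hδ0.le)
      have hfin : ENNReal.ofReal δ *
          (∫⁻ t in Ioi (0:ℝ), μ {a : ℝ | t < max a 0} * ENNReal.ofReal (t ^ (δ - 1))) < ⊤ := by
        rw [← hlc]; exact lt_of_le_of_lt hle hmom
      have hX : ∫⁻ t in Ioi (0:ℝ), μ {a : ℝ | t < max a 0} * ENNReal.ofReal (t ^ (δ - 1)) < ⊤ := by
        rcases ENNReal.mul_lt_top_iff.mp hfin with ⟨_, h⟩ | h | h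
        · exact h
        · simp [ENNReal.ofReal_eq_zero] at h; linarith
        · rw [h]; exact ENNReal.zero_lt_top
      refine lt_of_le_of_lt (le_trans (le_of_eq ?_)
        (lintegral_mono_set (Ioi_subset_Ioi zero_le_one))) hX
      refine setLIntegral_congr_fun measurableSet_Ioi (fun t ht => ?_)
      have : {a : ℝ | t < max a 0} = Ioi t := by
        ext a
        simp only [mem_setOf_eq, mem_Ioi, lt_max_iff]
        constructor
        · rintro (h | h)
          · exact h
          · exact absurd h (not_lt.2 (le_of_lt (lt_trans one_pos ht)))
        · exact fun h => Or.inl h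
      rw [this]
    -- finiteness of the left tail integral via the layer cake formula
    have hTL : ∫⁻ t in Iio (-1:ℝ), μ (Iic t) * ENNReal.ofReal (|t| ^ (δ - 1)) < ⊤ := by
      have hlc := lintegral_rpow_eq_lintegral_meas_le_mul μ (f := fun a => max (-a) 0)
        (Eventually.of_forall fun a => le_max_right (-a) 0)
        ((measurable_neg.max measurable_const).aemeasurable) hδ0
      have hle : ∫⁻ a, ENNReal.ofReal ((max (-a) 0) ^ δ) ∂μ ≤
          ∫⁻ a, ENNReal.ofReal (|a| ^ δ) ∂μ :=
        lintegral_mono fun a => ENNReal.ofReal_le_ofReal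
          (Real.rpow_le_rpow (le_max_right (-a) 0) (hmaxL_le a) hδ0.le)
      have hfin : ENNReal.ofReal δ *
          (∫⁻ t in Ioi (0:ℝ), μ {a : ℝ | t ≤ max (-a) 0} * ENNReal.ofReal (t ^ (δ - 1))) < ⊤ := by
        rw [← hlc]; exact lt_of_le_of_lt hle hmom
      have hX : ∫⁻ t in Ioi (0:ℝ), μ {a : ℝ | t ≤ max (-a) 0} * ENNReal.ofReal (t ^ (δ - 1))
          < ⊤ := by
        rcases ENNReal.mul_lt_top_iff.mp hfin with ⟨_, h⟩ | h | h
        · exact h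
        · simp [ENNReal.ofReal_eq_zero] at h; linarith
        · rw [h]; exact ENNReal.zero_lt_top
      have hpre : (fun x : ℝ => -x) ⁻¹' (Iio (-1:ℝ)) = Ioi 1 := by
        ext x; simp [neg_lt_neg_iff]
      have hcv := (Measure.measurePreserving_neg (volume : Measure ℝ)).setLIntegral_comp_preimage_emb
        (Homeomorph.neg ℝ).measurableEmbedding
        (fun t => μ (Iic t) * ENNReal.ofReal (|t| ^ (δ - 1))) (Iio (-1:ℝ))
      rw [hpre] at hcv
      rw [← hcv]
      refine lt_of_le_of_lt (le_trans (le_of_eq ?_)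
        (lintegral_mono_set (Ioi_subset_Ioi zero_le_one))) hX
      refine setLIntegral_congr_fun measurableSet_Ioi (fun t ht => ?_)
      have h1 : {a : ℝ | t ≤ max (-a) 0} = Iic (-t) := by
        ext a
        simp only [mem_setOf_eq, mem_Iic, le_max_iff]
        constructor
        · rintro (h | h)
          · linarith
          · exact absurd h (not_le.2 (lt_trans one_pos ht))
        · intro h; left; linarith
      have h2 : |(-t : ℝ)| = t := by
        rw [abs_neg, abs_of_pos (lt_trans one_pos ht)]
      simp only [h1, h2]
    -- measurability facts
    have hmub : Measurable fun t : ℝ => μ (Ioi t) * ENNReal.ofReal (t ^ (δ - 1)) := by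
      simp_rw [hIoi]
      exact ((measurable_const.sub F.mono.measurable).ennreal_ofReal).mul (by fun_prop)
    have hmlb : Measurable fun t : ℝ => μ (Iic t) * ENNReal.ofReal (|t| ^ (δ - 1)) := by
      simp_rw [hIic]
      exact (F.mono.measurable.ennreal_ofReal).mul (by fun_prop)
    -- assemble
    have hmid : ∫⁻ t in Icc (-1:ℝ) 1, ENNReal.ofReal ((F t * (1 - F t)) ^ b) < ⊤ := by
      calc ∫⁻ t in Icc (-1:ℝ) 1, ENNReal.ofReal ((F t * (1 - F t)) ^ b)
          ≤ ∫⁻ _ in Icc (-1:ℝ) 1, (1:ENNReal) := lintegral_mono fun t => hfle1 t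
        _ = volume (Icc (-1:ℝ) 1) := setLIntegral_one _
        _ < ⊤ := by rw [Real.volume_Icc]; exact ENNReal.ofReal_lt_top
    have hright : ∫⁻ t in Ioi (1:ℝ), ENNReal.ofReal ((F t * (1 - F t)) ^ b) < ⊤ := by
      have hstep : ∫⁻ t in Ioi (1:ℝ), ENNReal.ofReal ((F t * (1 - F t)) ^ b) ≤
          ∫⁻ t in Ioi (1:ℝ), ENNReal.ofReal (Mr ^ (b - 1)) *
            (μ (Ioi t) * ENNReal.ofReal (t ^ (δ - 1))) := by
        refine setLIntegral_mono (measurable_const.mul hmub) fun t ht => ?_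
        rw [hIoi t]
        calc ENNReal.ofReal ((F t * (1 - F t)) ^ b)
            ≤ ENNReal.ofReal (Mr ^ (b - 1) * ((1 - F t) * t ^ (δ - 1))) :=
              ENNReal.ofReal_le_ofReal (hkeyR t ht)
          _ = ENNReal.ofReal (Mr ^ (b - 1)) *
              (ENNReal.ofReal (1 - F t) * ENNReal.ofReal (t ^ (δ - 1))) := by
              rw [ENNReal.ofReal_mul (Real.rpow_nonneg hMr0 _),
                ENNReal.ofReal_mul (sub_nonneg.2 (hF1 t))]
      rw [lintegral_const_mul' _ _ ENNReal.ofReal_ne_top] at hstep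
      exact lt_of_le_of_lt hstep (ENNReal.mul_lt_top ENNReal.ofReal_lt_top hTR)
    have hleft : ∫⁻ t in Iio (-1:ℝ), ENNReal.ofReal ((F t * (1 - F t)) ^ b) < ⊤ := by
      have hstep : ∫⁻ t in Iio (-1:ℝ), ENNReal.ofReal ((F t * (1 - F t)) ^ b) ≤
          ∫⁻ t in Iio (-1:ℝ), ENNReal.ofReal (Mr ^ (b - 1)) *
            (μ (Iic t) * ENNReal.ofReal (|t| ^ (δ - 1))) := by
        refine setLIntegral_mono (measurable_const.mul hmlb) fun t ht => ?_
        rw [hIic t]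
        calc ENNReal.ofReal ((F t * (1 - F t)) ^ b)
            ≤ ENNReal.ofReal (Mr ^ (b - 1) * (F t * |t| ^ (δ - 1))) :=
              ENNReal.ofReal_le_ofReal (hkeyL t ht)
          _ = ENNReal.ofReal (Mr ^ (b - 1)) *
              (ENNReal.ofReal (F t) * ENNReal.ofReal (|t| ^ (δ - 1))) := by
              rw [ENNReal.ofReal_mul (Real.rpow_nonneg hMr0 _),
                ENNReal.ofReal_mul (hF0 t)]
      rw [lintegral_const_mul' _ _ ENNReal.ofReal_ne_top] at hstep
      exact lt_of_le_of_lt hstep (ENNReal.mul_lt_top ENNReal.ofReal_lt_top hTL)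
    calc ∫⁻ t, ENNReal.ofReal ((F t * (1 - F t)) ^ b)
        = (∫⁻ t in Icc (-1:ℝ) 1, ENNReal.ofReal ((F t * (1 - F t)) ^ b)) +
          ∫⁻ t in (Icc (-1:ℝ) 1)ᶜ, ENNReal.ofReal ((F t * (1 - F t)) ^ b) :=
          (lintegral_add_compl _ measurableSet_Icc).symm
      _ ≤ (∫⁻ t in Icc (-1:ℝ) 1, ENNReal.ofReal ((F t * (1 - F t)) ^ b)) +
          ((∫⁻ t in Iio (-1:ℝ), ENNReal.ofReal ((F t * (1 - F t)) ^ b)) +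
           ∫⁻ t in Ioi (1:ℝ), ENNReal.ofReal ((F t * (1 - F t)) ^ b)) := by
          gcongr
          have hc : (Icc (-1:ℝ) 1)ᶜ = Iio (-1) ∪ Ioi 1 := by
            ext x
            simp only [mem_compl_iff, mem_Icc, mem_union, mem_Iio, mem_Ioi, not_and_or, not_le]
          rw [hc]
          exact lintegral_union_le _ _ _
      _ < ⊤ := ENNReal.add_lt_top.2 ⟨hmid, ENNReal.add_lt_top.2 ⟨hleft, hright⟩⟩
end

section
/- Hoeffding's inequality (relative entropy form): if ξ_1,...,ξ_n are i.i.d. random variables with values in [0,1], mean μ = E[ξ_1], and 0 < ε < 1-μ, then P(n^{-1} Σ ξ_i - μ ≥ ε) ≤ [ (μ/(μ+ε))^{μ+ε} ((1-μ)/(1-μ-ε))^{1-μ-ε} ]^n. -/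
open MeasureTheory ProbabilityTheory

lemma int_bdd {Ω : Type*} [MeasurableSpace Ω] (μ : Measure Ω) [IsProbabilityMeasure μ]
    {f : Ω → ℝ} (hf : Measurable f) (C : ℝ) (h : ∀ ω, |f ω| ≤ C) : Integrable f μ :=
  (integrable_const C).mono' hf.aestronglyMeasurable (Filter.Eventually.of_forall h)

/-- Hoeffding's inequality in relative-entropy form for i.i.d. `[0,1]`-valued
random variables. -/
theorem stmt7 {Ω : Type*} [MeasurableSpace Ω] (μ : Measure Ω) [IsProbabilityMeasure μ]
    (n : ℕ) (hn : 0 < n) (ξ : Fin n → Ω → ℝ) (hmeas : ∀ i, Measurable (ξ i))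
    (hindep : iIndepFun ξ μ)
    (hident : ∀ i, Measure.map (ξ i) μ = Measure.map (ξ ⟨0, hn⟩) μ)
    (hbd : ∀ i ω, ξ i ω ∈ Set.Icc (0 : ℝ) 1)
    (m : ℝ) (hm : m = ∫ ω, ξ ⟨0, hn⟩ ω ∂μ)
    (ε : ℝ) (hε : 0 < ε) (hε' : ε < 1 - m) :
    (μ {ω | m + ε ≤ (∑ i, ξ i ω) / n}).toReal
      ≤ ((m / (m + ε)) ^ (m + ε) * ((1 - m) / (1 - m - ε)) ^ (1 - m - ε)) ^ (n : ℕ) := by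
  have hnR : (0 : ℝ) < n := Nat.cast_pos.2 hn
  set ξ0 := ξ ⟨0, hn⟩ with hξ0
  have hint : ∀ i, Integrable (ξ i) μ := fun i =>
    int_bdd μ (hmeas i) 1 (fun ω => abs_le.2 ⟨by linarith [(hbd i ω).1], (hbd i ω).2⟩)
  have hmi : ∀ i, ∫ ω, ξ i ω ∂μ = m := by
    intro i
    rw [hm]
    have h1 : ∫ ω, ξ i ω ∂μ = ∫ x, x ∂(Measure.map (ξ i) μ) :=
      (integral_map (hmeas i).aemeasurable measurable_id.aestronglyMeasurable).symm
    have h2 : ∫ ω, ξ0 ω ∂μ = ∫ x, x ∂(Measure.map ξ0 μ) :=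
      (integral_map (hmeas _).aemeasurable measurable_id.aestronglyMeasurable).symm
    rw [h1, h2, hident i]
  have hm0 : 0 ≤ m := by
    rw [hm]; exact integral_nonneg fun ω => (hbd _ ω).1
  have hm1 : m < 1 := by linarith
  rcases hm0.eq_or_lt with h0 | hmpos
  · -- m = 0 : both sides are 0
    have hRHS : ((m / (m + ε)) ^ (m + ε) * ((1 - m) / (1 - m - ε)) ^ (1 - m - ε)) ^ (n : ℕ)
        = 0 := by
      rw [← h0]
      simp only [zero_div, zero_add]
      rw [Real.zero_rpow hε.ne', zero_mul, zero_pow hn.ne']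
    rw [hRHS]
    have hzero : ∀ i : Fin n, ξ i =ᵐ[μ] 0 := by
      intro i
      have := (integral_eq_zero_iff_of_nonneg (fun ω => (hbd i ω).1) (hint i)).1
        (by rw [hmi i, ← h0])
      exact this
    have hae : ∀ᵐ ω ∂μ, ω ∉ {ω | m + ε ≤ (∑ i, ξ i ω) / n} := by
      have hall : ∀ᵐ ω ∂μ, ∀ i : Fin n, ξ i ω = 0 := by
        rw [MeasureTheory.ae_all_iff]; exact fun i => hzero i
      filter_upwards [hall] with ω hω
      simp only [Set.mem_setOf_eq, not_le]
      rw [Finset.sum_congr rfl fun i _ => hω i]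
      simp only [Finset.sum_const_zero, zero_div]
      linarith
    have : μ {ω | m + ε ≤ (∑ i, ξ i ω) / n} = 0 := by
      have := MeasureTheory.ae_iff.mp hae
      simpa [not_not] using this
    rw [this]; simp
  · -- main case 0 < m
    have ha : 0 < m + ε := by linarith
    have hb : 0 < 1 - m - ε := by linarith
    have h1m : 0 < 1 - m := by linarith
    set R : ℝ := (m + ε) * (1 - m) / (m * (1 - m - ε)) with hR
    have hRden : 0 < m * (1 - m - ε) := mul_pos hmpos hb
    have hRpos : 0 < R := div_pos (mul_pos ha h1m) hRden
    have hR1 : 1 < R := by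
      rw [hR, lt_div_iff₀ hRden]; nlinarith
    set t : ℝ := Real.log R with htdef
    have ht : 0 < t := Real.log_pos hR1
    have hexpt : Real.exp t = R := Real.exp_log hRpos
    set S : Ω → ℝ := fun ω => ∑ i, ξ i ω with hS
    have hSm : Measurable S := Finset.measurable_sum _ fun i _ => hmeas i
    have hSb : ∀ ω, S ω ≤ n := by
      intro ω
      calc S ω ≤ ∑ _i : Fin n, (1 : ℝ) := Finset.sum_le_sum fun i _ => (hbd i ω).2
        _ = n := by simp
    have hS0 : ∀ ω, 0 ≤ S ω := fun ω => Finset.sum_nonneg fun i _ => (hbd i ω).1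
    have hintS : Integrable (fun ω => Real.exp (t * S ω)) μ := by
      refine int_bdd μ ((measurable_const.mul hSm).exp) (Real.exp (t * n)) fun ω => ?_
      rw [abs_of_pos (Real.exp_pos _)]
      exact Real.exp_le_exp.2 (mul_le_mul_of_nonneg_left (hSb ω) ht.le)
    -- Chernoff
    have hsetEq : {ω | m + ε ≤ (∑ i, ξ i ω) / n} = {ω | (m + ε) * n ≤ S ω} := by
      ext ω; simp only [Set.mem_setOf_eq, hS]
      rw [le_div_iff₀ hnR]
    have hcher : (μ {ω | (m + ε) * n ≤ S ω}).toReal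
        ≤ Real.exp (-t * ((m + ε) * n)) * mgf S μ t :=
      measure_ge_le_exp_mul_mgf _ ht.le hintS
    -- mgf of sum
    have hmgf_eq : ∀ i, mgf (ξ i) μ t = mgf ξ0 μ t := by
      intro i
      have h1 : mgf (ξ i) μ t = ∫ x, Real.exp (t * x) ∂(Measure.map (ξ i) μ) :=
        (integral_map (hmeas i).aemeasurable
          (measurable_const.mul measurable_id).exp.aestronglyMeasurable).symm
      have h2 : mgf ξ0 μ t = ∫ x, Real.exp (t * x) ∂(Measure.map ξ0 μ) :=
        (integral_map (hmeas _).aemeasurable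
          (measurable_const.mul measurable_id).exp.aestronglyMeasurable).symm
      rw [h1, h2, hident i]
    have hmgfS : mgf S μ t = (mgf ξ0 μ t) ^ n := by
      have hfun : S = ∑ i, ξ i := by
        funext ω; rw [hS]; simp [Finset.sum_apply]
      rw [hfun, hindep.mgf_sum hmeas Finset.univ]
      rw [Finset.prod_congr rfl fun i _ => hmgf_eq i]
      simp
    -- bound on mgf of ξ0
    have hintexp0 : Integrable (fun ω => Real.exp (t * ξ0 ω)) μ := by
      refine int_bdd μ ((measurable_const.mul (hmeas _)).exp) (Real.exp t) fun ω => ?_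
      rw [abs_of_pos (Real.exp_pos _)]
      exact Real.exp_le_exp.2 (by nlinarith [(hbd ⟨0, hn⟩ ω).2, ht.le])
    have hkey : ∀ x ∈ Set.Icc (0:ℝ) 1, Real.exp (t * x) ≤ 1 - x + x * Real.exp t := by
      intro x hx
      have hc := convexOn_exp.2 (Set.mem_univ (0:ℝ)) (Set.mem_univ t)
        (sub_nonneg.2 hx.2) hx.1 (by ring)
      simp only [smul_eq_mul, mul_zero, zero_add, Real.exp_zero, mul_one] at hc
      rw [mul_comm]
      linarith
    have hmgf0 : mgf ξ0 μ t ≤ 1 - m + m * Real.exp t := by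
      have hle : ∫ ω, Real.exp (t * ξ0 ω) ∂μ ≤ ∫ ω, (1 - ξ0 ω + ξ0 ω * Real.exp t) ∂μ := by
        refine integral_mono hintexp0 ?_ fun ω => hkey _ (hbd _ ω)
        exact ((integrable_const (1:ℝ)).sub (hint _)).add ((hint _).mul_const _)
      have hI1 : Integrable (fun ω => 1 - ξ0 ω) μ := (integrable_const 1).sub (hint _)
      have hI2 : Integrable (fun ω => ξ0 ω * Real.exp t) μ := (hint _).mul_const _
      have heval : ∫ ω, (1 - ξ0 ω + ξ0 ω * Real.exp t) ∂μ = 1 - m + m * Real.exp t := by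
        rw [integral_add hI1 hI2, integral_sub (integrable_const (1:ℝ)) (hint _),
          integral_mul_const, integral_const, hmi]
        simp
      calc mgf ξ0 μ t = ∫ ω, Real.exp (t * ξ0 ω) ∂μ := rfl
        _ ≤ _ := hle
        _ = _ := heval
    have hBpos : (0:ℝ) < 1 - m + m * Real.exp t := by
      have := Real.exp_pos t; nlinarith
    -- combine
    have hchain : (μ {ω | m + ε ≤ (∑ i, ξ i ω) / n}).toReal
        ≤ (Real.exp (-t * (m + ε)) * (1 - m + m * Real.exp t)) ^ n := by
      rw [hsetEq]
      calc (μ {ω | (m + ε) * n ≤ S ω}).toReal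
          ≤ Real.exp (-t * ((m + ε) * n)) * mgf S μ t := hcher
        _ = Real.exp (-t * ((m + ε) * n)) * (mgf ξ0 μ t) ^ n := by rw [hmgfS]
        _ ≤ Real.exp (-t * ((m + ε) * n)) * (1 - m + m * Real.exp t) ^ n := by
            have := pow_le_pow_left₀ (mgf_nonneg) hmgf0 n
            exact mul_le_mul_of_nonneg_left this (Real.exp_pos _).le
        _ = (Real.exp (-t * (m + ε)) * (1 - m + m * Real.exp t)) ^ n := by
            rw [mul_pow, ← Real.exp_nat_mul]
            ring_nf
    refine hchain.trans_eq ?_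
    congr 1
    -- base equality
    have hfac : 1 - m + m * Real.exp t = (1 - m) / (1 - m - ε) := by
      rw [hexpt, hR]
      field_simp
      ring
    have hexpneg : Real.exp (-t * (m + ε)) = (m / (m + ε) * ((1 - m - ε) / (1 - m))) ^ (m + ε) := by
      have h1 : Real.exp (-t * (m + ε)) = R ^ (-(m + ε)) := by
        rw [Real.rpow_def_of_pos hRpos, htdef]; ring_nf
      rw [h1, Real.rpow_neg hRpos.le, ← Real.inv_rpow hRpos.le]
      congr 1
      rw [hR]
      field_simp
    rw [hfac, hexpneg]
    have hrm : (0:ℝ) ≤ m / (m + ε) := div_nonneg hm0 ha.le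
    have hrb : (0:ℝ) ≤ (1 - m - ε) / (1 - m) := div_nonneg hb.le h1m.le
    rw [Real.mul_rpow hrm hrb]
    have hcpos : (0:ℝ) < (1 - m) / (1 - m - ε) := div_pos h1m hb
    have hinv : (1 - m - ε) / (1 - m) = ((1 - m) / (1 - m - ε))⁻¹ := by
      field_simp
    rw [hinv, Real.inv_rpow hcpos.le, ← Real.rpow_neg hcpos.le]
    rw [mul_assoc]
    congr 1
    calc ((1 - m) / (1 - m - ε)) ^ (-(m + ε)) * ((1 - m) / (1 - m - ε))
        = ((1 - m) / (1 - m - ε)) ^ (-(m + ε)) * ((1 - m) / (1 - m - ε)) ^ (1:ℝ) := by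
          rw [Real.rpow_one]
      _ = ((1 - m) / (1 - m - ε)) ^ (-(m + ε) + 1) := by
          rw [← Real.rpow_add hcpos]
      _ = ((1 - m) / (1 - m - ε)) ^ (1 - m - ε) := by ring_nf
end
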